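/- Define the weight functions w_j := E[∏_{k=j+1}^{n} π_k | 𝒢_j] for j < n and w_n := 1, and define ρ := ∏_{j=0}^{n} π_j + Σ_{j=0}^{n} (1_{A_j} − π_j)·w_j·∏_{k=0}^{j−1} π_k. Then E[ρ | 𝒢_0] = E[∏_{j=0}^{n} π_j | 𝒢_0] P-almost surely; i.e., the conditional expectation of ρ given the initial history equals the propensity weight ω_0 (Lemma on the conditional expectation of ρ, CAPO case). -/

import Mathlib

open MeasureTheory Finset

/-- **Lemma (conditional expectation of ρ, CAPO case).**
With a filtration `𝒢`, treatment events `A_j ∈ 𝒢_{j+1}`, and `𝒢_j`-measurable propensities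
`π_j = E[1_{A_j} | 𝒢_j]` with `ε ≤ π_j ≤ 1` a.s., define the weight functions
`w_j := E[∏_{k=j+1}^{n} π_k | 𝒢_j]` for `j < n` and `w_n := 1`, and define
`ρ := ∏_{j=0}^{n} π_j + Σ_{j=0}^{n} (1_{A_j} − π_j)·w_j·∏_{k<j} π_k`.
Then `E[ρ | 𝒢_0] = E[∏_{j=0}^{n} π_j | 𝒢_0]` P-almost surely, i.e. the conditional
expectation of `ρ` given the initial history equals the propensity weight `ω_0`. -/
theorem condexp_rho_CAPO
    {Ω : Type*} {F : MeasurableSpace Ω} {P : Measure Ω} [IsProbabilityMeasure P]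
    (n : ℕ) (G : ℕ → MeasurableSpace Ω) (hG_mono : Monotone G) (hG_le : ∀ j, G j ≤ F)
    (A : ℕ → Set Ω) (hA : ∀ j ≤ n, MeasurableSet[G (j + 1)] (A j))
    (π : ℕ → Ω → ℝ) (hπ_meas : ∀ j ≤ n, Measurable[G j] (π j))
    (ε : ℝ) (hε : 0 < ε) (hπ_bd : ∀ j ≤ n, ∀ᵐ x ∂P, ε ≤ π j x ∧ π j x ≤ 1)
    (hπ_ce : ∀ j ≤ n, π j =ᵐ[P] P[(A j).indicator (fun _ => (1 : ℝ)) | G j])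
    (w : ℕ → Ω → ℝ)
    (hw : ∀ j < n, w j =ᵐ[P] P[fun x => ∏ k ∈ Icc (j + 1) n, π k x | G j])
    (hw_n : w n = fun _ => (1 : ℝ))
    (ρ : Ω → ℝ)
    (hρ : ρ = fun x =>
      (∏ j ∈ range (n + 1), π j x)
      + ∑ j ∈ range (n + 1),
          ((A j).indicator (fun _ => (1 : ℝ)) x - π j x) * w j x
            * ∏ k ∈ range j, π k x) :
    P[ρ | G 0] =ᵐ[P] P[fun x => ∏ j ∈ range (n + 1), π j x | G 0] := by
  classical
  -- a.e. bounds on all propensities simultaneously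
  have h_all : ∀ᵐ x ∂P, ∀ k, k ≤ n → ε ≤ π k x ∧ π k x ≤ 1 := by
    rw [ae_all_iff]
    intro k
    by_cases hk : k ≤ n
    · filter_upwards [hπ_bd k hk] with x hx _ using hx
    · filter_upwards with x hx using absurd hx hk
  have hπ_measF : ∀ k, k ≤ n → Measurable[F] (π k) := fun k hk =>
    (hπ_meas k hk).mono (hG_le k) le_rfl
  -- integrability from a.e. bound by 1
  have hInt : ∀ {f : Ω → ℝ}, AEStronglyMeasurable f P → (∀ᵐ x ∂P, |f x| ≤ 1) →
      Integrable f P := fun hm hb =>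
    Integrable.mono' (integrable_const 1) hm
      (by filter_upwards [hb] with x hx; simpa [Real.norm_eq_abs] using hx)
  -- bounds on partial products
  have hIcc_bd : ∀ j, ∀ᵐ x ∂P,
      0 ≤ ∏ k ∈ Icc (j + 1) n, π k x ∧ ∏ k ∈ Icc (j + 1) n, π k x ≤ 1 := by
    intro j
    filter_upwards [h_all] with x hx
    refine ⟨Finset.prod_nonneg fun k hk => le_trans hε.le (hx k (mem_Icc.1 hk).2).1, ?_⟩
    exact Finset.prod_le_one (fun k hk => le_trans hε.le (hx k (mem_Icc.1 hk).2).1)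
      (fun k hk => (hx k (mem_Icc.1 hk).2).2)
  have hrange_bd : ∀ j, j ≤ n + 1 → ∀ᵐ x ∂P,
      0 ≤ ∏ k ∈ range j, π k x ∧ ∏ k ∈ range j, π k x ≤ 1 := by
    intro j hj
    filter_upwards [h_all] with x hx
    have hk' : ∀ k ∈ range j, k ≤ n := fun k hk =>
      Nat.lt_succ_iff.1 (lt_of_lt_of_le (mem_range.1 hk) hj)
    refine ⟨Finset.prod_nonneg fun k hk => le_trans hε.le (hx k (hk' k hk)).1, ?_⟩
    exact Finset.prod_le_one (fun k hk => le_trans hε.le (hx k (hk' k hk)).1)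
      (fun k hk => (hx k (hk' k hk)).2)
  have hIcc_int : ∀ j, Integrable (fun x => ∏ k ∈ Icc (j + 1) n, π k x) P := by
    intro j
    refine hInt ((Finset.measurable_prod _ fun k hk =>
      hπ_measF k (mem_Icc.1 hk).2).aestronglyMeasurable) ?_
    filter_upwards [hIcc_bd j] with x hx
    rw [abs_of_nonneg hx.1]; exact hx.2
  -- measurable version of w
  set W : ℕ → Ω → ℝ := fun j => if j = n then (fun _ => (1 : ℝ))
    else P[fun x => ∏ k ∈ Icc (j + 1) n, π k x | G j] with hWdef
  have hW_eq : ∀ j, j ≤ n → w j =ᵐ[P] W j := by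
    intro j hj
    rcases eq_or_lt_of_le hj with rfl | hj'
    · simp [hWdef, hw_n]
    · simpa [hWdef, Nat.ne_of_lt hj'] using hw j hj'
  have hW_sm : ∀ j, StronglyMeasurable[G j] (W j) := by
    intro j
    by_cases h : j = n
    · simp only [hWdef, if_pos h]; exact stronglyMeasurable_const
    · simp only [hWdef, if_neg h]; exact stronglyMeasurable_condExp
  have hW_bd : ∀ j, ∀ᵐ x ∂P, |W j x| ≤ 1 := by
    intro j
    by_cases h : j = n
    · simp [hWdef, h]
    · simp only [hWdef, if_neg h]
      have h0 : (0 : Ω → ℝ) ≤ᵐ[P] P[fun x => ∏ k ∈ Icc (j + 1) n, π k x | G j] :=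
        condExp_nonneg (by filter_upwards [hIcc_bd j] with x hx using hx.1)
      have h1 : P[fun x => ∏ k ∈ Icc (j + 1) n, π k x | G j] ≤ᵐ[P] fun _ => (1 : ℝ) := by
        have := condExp_mono (μ := P) (m := G j) (hIcc_int j) (integrable_const (1 : ℝ))
          (by filter_upwards [hIcc_bd j] with x hx using hx.2)
        rwa [condExp_const (hG_le j)] at this
      filter_upwards [h0, h1] with x hx0 hx1
      rw [abs_le]; exact ⟨le_trans (by norm_num) hx0, hx1⟩
  -- indicator bound and integrability pieces
  have hind_bd : ∀ j x, |(A j).indicator (fun _ => (1 : ℝ)) x| ≤ 1 := by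
    intro j x
    by_cases hx : x ∈ A j <;> simp [Set.indicator_apply, hx]
  have hind_meas : ∀ j, j ≤ n → Measurable[F] ((A j).indicator (fun _ => (1 : ℝ))) := by
    intro j hj
    exact measurable_const.indicator (hG_le (j + 1) _ (hA j hj))
  have hind_int : ∀ j, j ≤ n → Integrable ((A j).indicator (fun _ => (1 : ℝ))) P := fun j hj =>
    hInt (hind_meas j hj).aestronglyMeasurable (Filter.Eventually.of_forall (hind_bd j))
  have hπ_int : ∀ j, j ≤ n → Integrable (π j) P := by
    intro j hj
    refine hInt (hπ_measF j hj).aestronglyMeasurable ?_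
    filter_upwards [hπ_bd j hj] with x hx
    rw [abs_le]; exact ⟨le_trans (by linarith) hx.1, hx.2⟩
  -- the martingale-increment terms
  set M : ℕ → Ω → ℝ := fun j x =>
    ((A j).indicator (fun _ => (1 : ℝ)) x - π j x) * w j x * ∏ k ∈ range j, π k x with hMdef
  have hd_bd : ∀ j, j ≤ n → ∀ᵐ x ∂P,
      |(A j).indicator (fun _ => (1 : ℝ)) x - π j x| ≤ 1 := by
    intro j hj
    filter_upwards [hπ_bd j hj] with x hx
    rw [abs_le]
    by_cases hxA : x ∈ A j
    · simp only [Set.indicator_of_mem hxA]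
      constructor <;> linarith [hx.1, hx.2]
    · simp only [Set.indicator_of_notMem hxA]
      simp only [zero_sub]
      constructor <;> linarith [hx.1, hx.2]
  have hd_int : ∀ j, j ≤ n →
      Integrable (fun x => (A j).indicator (fun _ => (1 : ℝ)) x - π j x) P := fun j hj =>
    (hind_int j hj).sub (hπ_int j hj)
  -- strongly measurable multiplier g_j = W_j * ∏_{k<j} π_k
  have hprod_meas : ∀ j, j ≤ n → Measurable[G j] (fun x => ∏ k ∈ range j, π k x) := by
    intro j hj
    refine Finset.measurable_prod _ fun k hk => ?_
    exact (hπ_meas k (le_trans (Nat.le_of_lt_succ (Nat.lt_succ_of_lt (mem_range.1 hk))) hj)).mono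
      (hG_mono (le_of_lt (mem_range.1 hk))) le_rfl
  have hg_sm : ∀ j, j ≤ n →
      StronglyMeasurable[G j] (fun x => W j x * ∏ k ∈ range j, π k x) := fun j hj =>
    (hW_sm j).mul (hprod_meas j hj).stronglyMeasurable
  have hg_bd : ∀ j, j ≤ n → ∀ᵐ x ∂P, |W j x * ∏ k ∈ range j, π k x| ≤ 1 := by
    intro j hj
    filter_upwards [hW_bd j, hrange_bd j (le_trans hj (Nat.le_succ n))] with x h1 h2
    rw [abs_mul]
    calc |W j x| * |∏ k ∈ range j, π k x| ≤ 1 * 1 := by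
          apply mul_le_mul h1 _ (abs_nonneg _) zero_le_one
          rw [abs_of_nonneg h2.1]; exact h2.2
      _ = 1 := by ring
  -- M j is a.e. equal to g_j * d_j
  have hM_eq : ∀ j, j ≤ n → M j =ᵐ[P] fun x =>
      (W j x * ∏ k ∈ range j, π k x) *
        ((A j).indicator (fun _ => (1 : ℝ)) x - π j x) := by
    intro j hj
    filter_upwards [hW_eq j hj] with x hx
    simp only [hMdef, hx]; ring
  have hgd_int : ∀ j, j ≤ n → Integrable (fun x =>
      (W j x * ∏ k ∈ range j, π k x) *
        ((A j).indicator (fun _ => (1 : ℝ)) x - π j x)) P := by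
    intro j hj
    refine hInt (((hg_sm j hj).mono (hG_le j)).aestronglyMeasurable.mul
      (((hind_meas j hj).sub (hπ_measF j hj)).aestronglyMeasurable)) ?_
    filter_upwards [hg_bd j hj, hd_bd j hj] with x h1 h2
    rw [abs_mul]
    calc _ ≤ 1 * 1 := mul_le_mul h1 h2 (abs_nonneg _) zero_le_one
      _ = 1 := by ring
  have hM_int : ∀ j, j ≤ n → Integrable (M j) P := fun j hj =>
    (hgd_int j hj).congr (hM_eq j hj).symm
  -- conditional expectation of d_j given G_j vanishes
  have hd_ce : ∀ j, j ≤ n →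
      P[fun x => (A j).indicator (fun _ => (1 : ℝ)) x - π j x | G j] =ᵐ[P] 0 := by
    intro j hj
    have h1 : (fun x => (A j).indicator (fun _ => (1 : ℝ)) x - π j x)
        = (A j).indicator (fun _ => (1 : ℝ)) - π j := rfl
    rw [h1]
    refine (condExp_sub (hind_int j hj) (hπ_int j hj) (G j)).trans ?_
    have h2 : P[π j | G j] = π j :=
      condExp_of_stronglyMeasurable (hG_le j) (hπ_meas j hj).stronglyMeasurable (hπ_int j hj)
    rw [h2]
    filter_upwards [hπ_ce j hj] with x hx
    simp only [Pi.sub_apply, Pi.zero_apply]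
    rw [← hx]; ring
  -- conditional expectation of M j given G_j vanishes
  have hM_ce : ∀ j, j ≤ n → P[M j | G j] =ᵐ[P] 0 := by
    intro j hj
    refine (condExp_congr_ae (hM_eq j hj)).trans ?_
    have hmul := condExp_mul_of_stronglyMeasurable_left (μ := P) (hg_sm j hj)
      (hgd_int j hj) (hd_int j hj)
    refine hmul.trans ?_
    filter_upwards [hd_ce j hj] with x hx
    simp only [Pi.mul_apply, Pi.zero_apply] at hx ⊢
    rw [hx]; ring
  -- hence given G_0
  have hM_ce0 : ∀ j, j ≤ n → P[M j | G 0] =ᵐ[P] 0 := by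
    intro j hj
    have h1 : P[P[M j | G j] | G 0] =ᵐ[P] P[M j | G 0] :=
      condExp_condExp_of_le (hG_mono (Nat.zero_le j)) (hG_le j)
    refine h1.symm.trans ?_
    refine (condExp_congr_ae (hM_ce j hj)).trans ?_
    rw [condExp_zero]
  -- assemble
  have hsum_eq : (fun x => ∑ j ∈ range (n + 1),
      ((A j).indicator (fun _ => (1 : ℝ)) x - π j x) * w j x * ∏ k ∈ range j, π k x)
      = ∑ j ∈ range (n + 1), M j := by
    funext x
    simp [hMdef, Finset.sum_apply]
  have hprod_int : Integrable (fun x => ∏ j ∈ range (n + 1), π j x) P := by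
    refine hInt ((Finset.measurable_prod _ fun k hk =>
      hπ_measF k (Nat.lt_succ_iff.1 (mem_range.1 hk))).aestronglyMeasurable) ?_
    filter_upwards [hrange_bd (n + 1) le_rfl] with x hx
    rw [abs_of_nonneg hx.1]; exact hx.2
  have hsum_int : Integrable (∑ j ∈ range (n + 1), M j) P := by
    rw [show (∑ j ∈ range (n + 1), M j) = fun a => ∑ j ∈ range (n + 1), M j a from by
      funext a; simp]
    exact integrable_finset_sum _ fun j hj => hM_int j (Nat.lt_succ_iff.1 (mem_range.1 hj))
  have hρ' : ρ = (fun x => ∏ j ∈ range (n + 1), π j x) + ∑ j ∈ range (n + 1), M j := by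
    rw [hρ, ← hsum_eq]; rfl
  rw [hρ']
  refine (condExp_add hprod_int hsum_int (G 0)).trans ?_
  have hsum_zero : ∀ s : Finset ℕ, (∀ j ∈ s, j ≤ n) →
      (∑ j ∈ s, (P[M j | G 0]) : Ω → ℝ) =ᵐ[P] 0 := by
    intro s
    induction s using Finset.induction with
    | empty => simp
    | @insert a s ha ih =>
      intro hs
      rw [Finset.sum_insert ha]
      have h1 := hM_ce0 a (hs a (Finset.mem_insert_self a s))
      have h2 := ih fun j hj => hs j (Finset.mem_insert_of_mem hj)
      filter_upwards [h1, h2] with x hx1 hx2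
      simp only [Pi.add_apply, hx1, hx2, Pi.zero_apply, add_zero]
  have hsum_ce : P[∑ j ∈ range (n + 1), M j | G 0] =ᵐ[P] 0 := by
    refine (condExp_finset_sum (fun j hj =>
      hM_int j (Nat.lt_succ_iff.1 (mem_range.1 hj))) (G 0)).trans ?_
    exact hsum_zero _ fun j hj => Nat.lt_succ_iff.1 (mem_range.1 hj)
  filter_upwards [hsum_ce] with x hx
  simp only [Pi.add_apply, hx, Pi.zero_apply, add_zero]
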